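/- Let n ≥ 1 and let L, j ∈ ℕ with 1 ≤ L and 0 ≤ j ≤ L. Then ∫₀¹ Π_{nL,c}(α) dα = ∫₀¹ Φ_{n,j}(α)·Π_{n(L−j),c}(α) dα. -/

import Mathlib

open Real MeasureTheory Filter

noncomputable section

/-- The perturbing sequence: `c j = 1` if `n ∣ j`, else `0`. -/
def pert (n j : ℕ) : ℕ := if n ∣ j then 1 else 0

/-- The lacunary trigonometric product `Π_{r,γ}(α) = ∏_{j<r} |cos(2^j α π + γ_j π/2)|`. -/
def PiProd (r : ℕ) (γ : ℕ → ℕ) (α : ℝ) : ℝ :=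
  ∏ j ∈ Finset.range r, |Real.cos (2 ^ j * α * π + γ j * π / 2)|

/-- The functions `Φ_{n,j}` defined recursively by `Φ_{n,0} = 1` and
`Φ_{n,j+1}(x) = 2^{-n} Σ_{k<2^n} Π_{n,c}((x+k)/2^n) · Φ_{n,j}((x+k)/2^n)`. -/
def Phi (n : ℕ) : ℕ → ℝ → ℝ
  | 0, _ => 1
  | j + 1, x => ((2:ℝ) ^ n)⁻¹ * ∑ k ∈ Finset.range (2 ^ n),
      PiProd n (pert n) ((x + k) / 2 ^ n) * Phi n j ((x + k) / 2 ^ n)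

lemma piProd_continuous (r : ℕ) (γ : ℕ → ℕ) : Continuous (PiProd r γ) := by
  unfold PiProd
  exact continuous_finset_prod _ fun j _ =>
    (Real.continuous_cos.comp (by continuity)).abs

lemma phi_continuous (n j : ℕ) : Continuous (Phi n j) := by
  induction j with
  | zero => exact continuous_const
  | succ j ih =>
    show Continuous fun x => ((2:ℝ) ^ n)⁻¹ * ∑ k ∈ Finset.range (2 ^ n),
      PiProd n (pert n) ((x + k) / 2 ^ n) * Phi n j ((x + k) / 2 ^ n)
    exact continuous_const.mul (continuous_finset_sum _ fun k _ =>
      ((piProd_continuous n (pert n)).comp (by continuity)).mul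
        (ih.comp (by continuity)))

lemma piProd_periodic (r : ℕ) (γ : ℕ → ℕ) (x : ℝ) (k : ℕ) :
    PiProd r γ (x + k) = PiProd r γ x := by
  unfold PiProd
  refine Finset.prod_congr rfl fun j _ => ?_
  have : (2:ℝ) ^ j * (x + k) * π + γ j * π / 2
      = (2 ^ j * x * π + γ j * π / 2) + ((2 ^ j * k : ℤ) : ℝ) * π := by
    push_cast; ring
  rw [this, Real.cos_add_int_mul_pi, abs_mul]
  have hone : |(-1:ℝ) ^ ((2:ℤ) ^ j * (k:ℤ))| = 1 := by
    rcases Int.even_or_odd ((2:ℤ) ^ j * (k:ℤ)) with h | h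
    · rw [h.neg_one_zpow]; simp
    · rw [Odd.neg_one_zpow h]; simp
  rw [hone, one_mul]

lemma piProd_split (n m : ℕ) (α : ℝ) :
    PiProd (n + n * m) (pert n) α
      = PiProd n (pert n) α * PiProd (n * m) (pert n) (2 ^ n * α) := by
  unfold PiProd
  rw [Finset.prod_range_add]
  congr 1
  refine Finset.prod_congr rfl fun j _ => ?_
  have h1 : pert n (n + j) = pert n j := by
    unfold pert
    congr 1
    simp [Nat.dvd_add_right (dvd_refl n)]
  have h2 : (2:ℝ) ^ (n + j) * α * π = 2 ^ j * (2 ^ n * α) * π := by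
    rw [pow_add]; ring
  rw [h1, h2]

lemma integral_split (f : ℝ → ℝ) (hf : Continuous f) (n : ℕ) :
    ∫ x in (0:ℝ)..1, f x
      = ((2:ℝ) ^ n)⁻¹ * ∑ k ∈ Finset.range (2 ^ n),
          ∫ x in (0:ℝ)..1, f ((x + k) / 2 ^ n) := by
  have h2 : ((2:ℝ) ^ n) ≠ 0 := by positivity
  have key : ∀ k : ℕ, (∫ x in (0:ℝ)..1, f ((x + k) / 2 ^ n))
      = (2:ℝ) ^ n * ∫ x in ((k:ℝ) / 2 ^ n)..(((k:ℝ)+1) / 2 ^ n), f x := by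
    intro k
    have : ∀ x : ℝ, f ((x + k) / 2 ^ n) = f (x / 2 ^ n + k / 2 ^ n) := by
      intro x; congr 1; ring
    simp only [this]
    rw [intervalIntegral.integral_comp_div_add f h2 ((k:ℝ)/2^n)]
    simp [smul_eq_mul]
    congr 1
    ring
  simp only [key, ← Finset.mul_sum, ← mul_assoc, inv_mul_cancel₀ h2, one_mul]
  have := intervalIntegral.sum_integral_adjacent_intervals
    (f := f) (μ := volume) (a := fun k => (k:ℝ) / 2 ^ n) (n := 2 ^ n)
    (fun k _ => (hf.intervalIntegrable _ _))
  simp only [Nat.cast_zero, zero_div] at this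
  push_cast at this
  rw [div_self h2] at this
  exact this.symm

/-- Recurrence relation for the integral of the lacunary product:
`∫₀¹ Π_{nL,c}(α) dα = ∫₀¹ Φ_{n,j}(α)·Π_{n(L-j),c}(α) dα` for `0 ≤ j ≤ L`. -/
theorem integral_PiProd_eq_Phi (n : ℕ) (hn : 1 ≤ n) (L j : ℕ) (hL : 1 ≤ L)
    (hj : j ≤ L) :
    ∫ α in (0:ℝ)..1, PiProd (n * L) (pert n) α =
      ∫ α in (0:ℝ)..1, Phi n j α * PiProd (n * (L - j)) (pert n) α := by
  induction j with
  | zero => simp [Phi]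
  | succ j ih =>
    rw [ih (le_of_lt (Nat.lt_of_succ_le hj))]
    have hjL : j < L := Nat.lt_of_succ_le hj
    -- step
    have hsub : n * (L - j) = n + n * (L - (j+1)) := by
      have : L - j = 1 + (L - (j+1)) := by omega
      rw [this]; ring
    have contg : Continuous fun α => Phi n j α * PiProd (n * (L - j)) (pert n) α :=
      (phi_continuous n j).mul (piProd_continuous _ _)
    rw [integral_split _ contg n]
    have step : ∀ x : ℝ, ∀ k : ℕ,
        Phi n j ((x + k) / 2 ^ n) * PiProd (n * (L - j)) (pert n) ((x + k) / 2 ^ n)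
          = (PiProd n (pert n) ((x + k) / 2 ^ n) * Phi n j ((x + k) / 2 ^ n))
              * PiProd (n * (L - (j+1))) (pert n) x := by
      intro x k
      rw [hsub, piProd_split]
      have h2 : (2:ℝ) ^ n * ((x + k) / 2 ^ n) = x + k := by
        field_simp
      rw [h2, piProd_periodic]
      ring
    have : ∀ x : ℝ, (∑ k ∈ Finset.range (2 ^ n),
        Phi n j ((x + k) / 2 ^ n) * PiProd (n * (L - j)) (pert n) ((x + k) / 2 ^ n))
          = (∑ k ∈ Finset.range (2 ^ n),
              PiProd n (pert n) ((x + k) / 2 ^ n) * Phi n j ((x + k) / 2 ^ n))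
            * PiProd (n * (L - (j+1))) (pert n) x := by
      intro x
      rw [Finset.sum_mul]
      exact Finset.sum_congr rfl fun k _ => step x k
    calc ((2:ℝ) ^ n)⁻¹ * ∑ k ∈ Finset.range (2 ^ n),
          ∫ x in (0:ℝ)..1, Phi n j ((x + k) / 2 ^ n)
            * PiProd (n * (L - j)) (pert n) ((x + k) / 2 ^ n)
        = ∫ x in (0:ℝ)..1, ((2:ℝ) ^ n)⁻¹ * ∑ k ∈ Finset.range (2 ^ n),
            Phi n j ((x + k) / 2 ^ n)
              * PiProd (n * (L - j)) (pert n) ((x + k) / 2 ^ n) := by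
          rw [intervalIntegral.integral_const_mul, intervalIntegral.integral_finset_sum]
          intro k _
          exact (((phi_continuous n j).comp (by continuity)).mul
            ((piProd_continuous _ _).comp (by continuity))).intervalIntegrable _ _
      _ = ∫ x in (0:ℝ)..1, Phi n (j+1) x * PiProd (n * (L - (j+1))) (pert n) x := by
          refine intervalIntegral.integral_congr fun x _ => ?_
          rw [this x]
          show _ = (((2:ℝ) ^ n)⁻¹ * _) * _
          ring


end
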